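/- For every real p with 0 < p < 1 and p ≠ 1/2, one has log₂(1 + 2·√(p·(1−p))) > −p·log₂ p − (1−p)·log₂(1−p), with equality when p = 1/2. -/
import Mathlib


open Real

/-- Logarithmic negativity exceeds entanglement cost for non-maximally
entangled pure qubit states: for `0 < p < 1`,
`log₂(1+2√(p(1−p))) > h(p)` iff `p ≠ 1/2`, with equality at `p = 1/2`. -/
theorem logNeg_gt_binEnt (p : ℝ) (hp0 : 0 < p) (hp1 : p < 1) :
    (p ≠ 1 / 2 →
      Real.logb 2 (1 + 2 * Real.sqrt (p * (1 - p))) >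
        -p * Real.logb 2 p - (1 - p) * Real.logb 2 (1 - p)) ∧
    (p = 1 / 2 →
      Real.logb 2 (1 + 2 * Real.sqrt (p * (1 - p))) =
        -p * Real.logb 2 p - (1 - p) * Real.logb 2 (1 - p)) := by
  set q : ℝ := 1 - p with hq
  have hq0 : 0 < q := by simp [hq]; linarith
  set a : ℝ := Real.sqrt p with ha
  set b : ℝ := Real.sqrt q with hb
  have ha0 : 0 < a := Real.sqrt_pos.mpr hp0
  have hb0 : 0 < b := Real.sqrt_pos.mpr hq0
  have ha2 : a ^ 2 = p := Real.sq_sqrt hp0.le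
  have hb2 : b ^ 2 = q := Real.sq_sqrt hq0.le
  have hab : Real.sqrt (p * q) = a * b := Real.sqrt_mul hp0.le q
  have hsum : 1 + 2 * (a * b) = (a + b) ^ 2 := by nlinarith [ha2, hb2]
  have hl2 : (0:ℝ) < Real.log 2 := Real.log_pos (by norm_num)
  constructor
  · intro hne
    have hpq : p ≠ q := by
      intro h; apply hne; rw [hq] at h; linarith
    have habne : a ≠ b := by
      intro h; apply hpq; rw [← ha2, ← hb2, h]
    have hxy : a⁻¹ ≠ b⁻¹ := by
      simpa [inv_inj] using habne
    have hconc := strictConcaveOn_log_Ioi.2 (Set.mem_Ioi.mpr (inv_pos.mpr ha0))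
      (Set.mem_Ioi.mpr (inv_pos.mpr hb0)) hxy hp0 hq0 (by rw [hq]; ring)
    simp only [smul_eq_mul] at hconc
    have hpa : p * a⁻¹ = a := by
      field_simp; nlinarith [ha2]
    have hqb : q * b⁻¹ = b := by
      field_simp; nlinarith [hb2]
    rw [hpa, hqb, Real.log_inv, Real.log_inv] at hconc
    -- hconc : p * (-log a) + q * (-log b) < log (a + b)
    have hloga : Real.log p = 2 * Real.log a := by
      rw [← ha2, Real.log_pow]; push_cast; ring
    have hlogb' : Real.log q = 2 * Real.log b := by
      rw [← hb2, Real.log_pow]; push_cast; ring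
    have key : -p * Real.log p - q * Real.log q < Real.log (1 + 2 * Real.sqrt (p * q)) := by
      rw [hab, hsum, Real.log_pow, hloga, hlogb']
      push_cast
      nlinarith [hconc]
    rw [gt_iff_lt]
    unfold Real.logb
    calc -p * (Real.log p / Real.log 2) - q * (Real.log q / Real.log 2)
        = (-p * Real.log p - q * Real.log q) / Real.log 2 := by ring
      _ < Real.log (1 + 2 * Real.sqrt (p * q)) / Real.log 2 :=
          (div_lt_div_iff_of_pos_right hl2).mpr key
  · intro hpe
    subst hpe
    have h4 : (1:ℝ)/2 * (1 - 1/2) = (1/2)^2 := by norm_num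
    rw [h4, Real.sqrt_sq (by norm_num : (0:ℝ) ≤ 1/2)]
    have h2 : (1:ℝ) + 2 * (1/2) = 2 := by norm_num
    rw [h2]
    have hhalf : Real.logb 2 (1/2) = -1 := by
      rw [show (1:ℝ)/2 = 2⁻¹ by norm_num, Real.logb_inv,
        Real.logb_self_eq_one (by norm_num : (1:ℝ) < 2)]
    have hq' : q = 1/2 := by rw [hq]; norm_num
    rw [hq', Real.logb_self_eq_one (by norm_num : (1:ℝ) < 2), hhalf]
    norm_num
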